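/- Let q be a prime power, let A ∈ 𝔽_q[T] be monic, and let f : ℝ → ℝ be any function. Then the sum over monic divisors B of A of μ(B)·f(Ω(B)) equals (−1)^{Ω(A)} · D_{Ω(A)} f(0), where D_n denotes the n-th forward difference operator. -/

import Mathlib

open Filter Topology Polynomial Asymptotics
open scoped Classical

variable {F : Type} [Field F] [Fintype F]

/-- The Möbius function for (monic) polynomials over a finite field:
`μ(A) = 1` if `A = 1`, `(-1)^k` if `A` is a product of `k` distinct primes, `0` otherwise. -/
noncomputable def muFF (A : Polynomial F) : ℤ :=
  if Squarefree A then
    (-1) ^ (UniqueFactorizationMonoid.normalizedFactors A).toFinset.card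
  else 0

/-- `𝒩(A)`: the set of degrees of prime (monic irreducible) divisors of `A`. -/
noncomputable def NSet (A : Polynomial F) : Finset ℕ :=
  (Finset.range (A.natDegree + 1)).filter fun d =>
    ∃ P : Polynomial F, P.Monic ∧ Irreducible P ∧ P ∣ A ∧ P.natDegree = d

/-- `Ω(A)`: the number of distinct degrees of prime divisors of `A`. -/
noncomputable def OmegaFF (A : Polynomial F) : ℕ := (NSet A).card

/-- `δ_k(A)`: the `k`-th smallest element of `𝒩(A)` (and `0` if `k > Ω(A)`). -/
noncomputable def deltaSmall (k : ℕ) (A : Polynomial F) : ℕ :=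
  ((NSet A).sort (· ≤ ·)).getD (k - 1) 0

/-- `Δ_k(A)`: the `k`-th largest element of `𝒩(A)` (and `0` if `k > Ω(A)`). -/
noncomputable def DeltaLarge (k : ℕ) (A : Polynomial F) : ℕ :=
  (((NSet A).sort (· ≤ ·)).reverse).getD (k - 1) 0

/-- `P_min(A)`: the set of prime divisors of `A` of minimal degree `δ₁(A)`. -/
noncomputable def Pmin (A : Polynomial F) : Set (Polynomial F) :=
  {P | P.Monic ∧ Irreducible P ∧ P ∣ A ∧ P.natDegree = deltaSmall 1 A}

/-- `𝒟(𝒮)`: monic polynomials whose set of minimal-degree prime divisors is a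
singleton `{P}` with `P ∈ 𝒮`. -/
noncomputable def DSet (S : Set (Polynomial F)) : Set (Polynomial F) :=
  {A | A.Monic ∧ ∃ P ∈ S, Pmin A = {P}}

/-- `Q_𝒮^{(k)}(A) = #{P ∈ 𝒮 : P ∣ A, deg P = Δ_k(A)}`. -/
noncomputable def QS (S : Set (Polynomial F)) (k : ℕ) (A : Polynomial F) : ℕ :=
  {P | P ∈ S ∧ P ∣ A ∧ P.natDegree = DeltaLarge k A}.ncard

/-- The `n`-th forward difference operator: `D₀ f = f`,
`D_{n+1} f x = D_n f (x+1) - D_n f x`. -/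
def fwdDiffIter : ℕ → (ℝ → ℝ) → (ℝ → ℝ)
  | 0, f => f
  | n + 1, f => fun x => fwdDiffIter n f (x + 1) - fwdDiffIter n f x

section Aux

open UniqueFactorizationMonoid Finset

lemma fwdDiffIter_succ_apply (n : ℕ) (f : ℝ → ℝ) (x : ℝ) :
    fwdDiffIter (n + 1) f x = fwdDiffIter n f (x + 1) - fwdDiffIter n f x := rfl

lemma fwdDiffIter_shift (n : ℕ) (f : ℝ → ℝ) (x : ℝ) :
    fwdDiffIter (n + 1) f x = fwdDiffIter n (fun y => f (y + 1) - f y) x := by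
  induction n generalizing x with
  | zero => rfl
  | succ n ih =>
      rw [fwdDiffIter_succ_apply (n + 1) f x, ih (x + 1), ih x]
      rfl

lemma fwdDiffIter_neg (n : ℕ) (f : ℝ → ℝ) (x : ℝ) :
    fwdDiffIter n (fun y => -(f y)) x = -fwdDiffIter n f x := by
  induction n generalizing x with
  | zero => rfl
  | succ n ih =>
      rw [fwdDiffIter_succ_apply, fwdDiffIter_succ_apply, ih, ih]
      ring

lemma fwdDiffIter_subshift (n : ℕ) (f : ℝ → ℝ) (x : ℝ) :
    fwdDiffIter n (fun y => f y - f (y + 1)) x = -fwdDiffIter (n + 1) f x := by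
  have h : (fun y => f y - f (y + 1)) = fun y => -((fun z => f (z + 1) - f z) y) := by
    funext y; ring
  rw [h, fwdDiffIter_neg, fwdDiffIter_shift]

/-- The key combinatorial lemma. -/
lemma comb {α : Type*} (g : α → ℕ) (P : Finset α) :
    ∀ f : ℝ → ℝ,
      ∑ s ∈ P.powerset, (-1 : ℝ) ^ s.card * f ((s.image g).card)
        = (-1) ^ (P.image g).card * fwdDiffIter ((P.image g).card) f 0 := by
  classical
  induction P using Finset.strongInduction with
  | _ P ih =>
    intro f
    rcases P.eq_empty_or_nonempty with rfl | ⟨p, hp⟩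
    · simp [fwdDiffIter]
    · set d := g p with hd
      set Pd := P.filter (fun a => g a = d) with hPd
      set P' := P.filter (fun a => ¬ g a = d) with hP'
      have hPdne : Pd.Nonempty := ⟨p, Finset.mem_filter.2 ⟨hp, rfl⟩⟩
      have hP'ss : P' ⊂ P := Finset.filter_ssubset.mpr ⟨p, hp, fun h => h rfl⟩
      -- the image of `P` is `insert d (P'.image g)`
      have hdni : d ∉ P'.image g := by
        intro hmem
        obtain ⟨a, ha, hga⟩ := Finset.mem_image.1 hmem
        exact (Finset.mem_filter.1 ha).2 hga
      have himg : P.image g = insert d (P'.image g) := by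
        ext e
        simp only [Finset.mem_image, Finset.mem_insert, hP', Finset.mem_filter]
        constructor
        · rintro ⟨a, ha, rfl⟩
          by_cases h : g a = d
          · exact Or.inl h
          · exact Or.inr ⟨a, ⟨ha, h⟩, rfl⟩
        · rintro (rfl | ⟨a, ⟨ha, -⟩, rfl⟩)
          · exact ⟨p, hp, rfl⟩
          · exact ⟨a, ha, rfl⟩
      have hcard : (P.image g).card = (P'.image g).card + 1 := by
        rw [himg, Finset.card_insert_of_notMem hdni]
      -- decompose the sum over subsets of `P` into pairs of subsets of `Pd` and `P'`
      have hsplit :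
          ∑ s ∈ P.powerset, (-1 : ℝ) ^ s.card * f ((s.image g).card)
            = ∑ x ∈ Pd.powerset ×ˢ P'.powerset,
                (-1 : ℝ) ^ (x.1 ∪ x.2).card * f (((x.1 ∪ x.2).image g).card) := by
        refine Finset.sum_nbij'
          (fun s => (s.filter (fun a => g a = d), s.filter (fun a => ¬ g a = d)))
          (fun x => x.1 ∪ x.2) ?_ ?_ ?_ ?_ ?_
        · intro s hs
          rw [Finset.mem_powerset] at hs
          rw [Finset.mem_product, Finset.mem_powerset, Finset.mem_powerset]
          exact ⟨Finset.filter_subset_filter _ hs, Finset.filter_subset_filter _ hs⟩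
        · intro x hx
          rw [Finset.mem_product, Finset.mem_powerset, Finset.mem_powerset] at hx
          rw [Finset.mem_powerset]
          exact Finset.union_subset (hx.1.trans (Finset.filter_subset _ _))
            (hx.2.trans (Finset.filter_subset _ _))
        · intro s _
          exact Finset.filter_union_filter_not_eq _ s
        · intro x hx
          rw [Finset.mem_product, Finset.mem_powerset, Finset.mem_powerset] at hx
          have h1 : ∀ a ∈ x.1, g a = d := fun a ha => (Finset.mem_filter.1 (hx.1 ha)).2
          have h2 : ∀ a ∈ x.2, ¬ g a = d := fun a ha => (Finset.mem_filter.1 (hx.2 ha)).2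
          have e1 : (x.1 ∪ x.2).filter (fun a => g a = d) = x.1 := by
            ext a
            simp only [Finset.mem_filter, Finset.mem_union]
            constructor
            · rintro ⟨h | h, hgd⟩
              · exact h
              · exact absurd hgd (h2 a h)
            · intro h; exact ⟨Or.inl h, h1 a h⟩
          have e2 : (x.1 ∪ x.2).filter (fun a => ¬ g a = d) = x.2 := by
            ext a
            simp only [Finset.mem_filter, Finset.mem_union]
            constructor
            · rintro ⟨h | h, hgd⟩
              · exact absurd (h1 a h) hgd
              · exact h
            · intro h; exact ⟨Or.inr h, h2 a h⟩
          simp only [e1, e2]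
        · intro s hs
          simp only [Finset.filter_union_filter_not_eq]
      rw [hsplit, Finset.sum_product, Finset.sum_comm]
      -- evaluate the inner sum over subsets of `Pd`
      have key : ∀ v ∈ P'.powerset,
          (∑ u ∈ Pd.powerset, (-1 : ℝ) ^ (u ∪ v).card * f (((u ∪ v).image g).card))
            = (-1 : ℝ) ^ v.card *
                (f ((v.image g).card) - f (((v.image g).card : ℝ) + 1)) := by
        intro v hv
        rw [Finset.mem_powerset] at hv
        have h2 : ∀ a ∈ v, ¬ g a = d := fun a ha => (Finset.mem_filter.1 (hv ha)).2
        have hdv : d ∉ v.image g := by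
          intro hmem
          obtain ⟨a, ha, hga⟩ := Finset.mem_image.1 hmem
          exact h2 a ha hga
        have hterm : ∀ u ∈ Pd.powerset.erase ∅,
            (-1 : ℝ) ^ (u ∪ v).card * f (((u ∪ v).image g).card)
              = (-1 : ℝ) ^ u.card * ((-1 : ℝ) ^ v.card * f (((v.image g).card : ℝ) + 1)) := by
          intro u hu
          obtain ⟨hune, hu⟩ := Finset.mem_erase.1 hu
          rw [Finset.mem_powerset] at hu
          have h1 : ∀ a ∈ u, g a = d := fun a ha => (Finset.mem_filter.1 (hu ha)).2
          have hdisj : Disjoint u v := by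
            rw [Finset.disjoint_left]
            intro a hau hav
            exact h2 a hav (h1 a hau)
          have hcardu : (u ∪ v).card = u.card + v.card :=
            Finset.card_union_of_disjoint hdisj
          have himgu : (u ∪ v).image g = insert d (v.image g) := by
            obtain ⟨a0, ha0⟩ := Finset.nonempty_iff_ne_empty.2 hune
            ext e
            simp only [Finset.mem_image, Finset.mem_insert, Finset.mem_union]
            constructor
            · rintro ⟨a, ha | ha, rfl⟩
              · exact Or.inl (h1 a ha)
              · exact Or.inr ⟨a, ha, rfl⟩
            · rintro (rfl | ⟨a, ha, rfl⟩)
              · exact ⟨a0, Or.inl ha0, h1 a0 ha0⟩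
              · exact ⟨a, Or.inr ha, rfl⟩
          have hcardi : ((u ∪ v).image g).card = (v.image g).card + 1 := by
            rw [himgu, Finset.card_insert_of_notMem hdv]
          rw [hcardu, hcardi]
          push_cast
          ring
        rw [← Finset.add_sum_erase _ _ (Finset.empty_mem_powerset Pd),
          Finset.sum_congr rfl hterm, ← Finset.sum_mul]
        have hz : (∑ u ∈ Pd.powerset, (-1 : ℝ) ^ u.card) = 0 := by
          exact_mod_cast Finset.sum_powerset_neg_one_pow_card_of_nonempty hPdne
        have hz' : (∑ u ∈ Pd.powerset.erase ∅, (-1 : ℝ) ^ u.card) = -1 := by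
          have := Finset.add_sum_erase _ (fun u : Finset α => (-1 : ℝ) ^ u.card)
            (Finset.empty_mem_powerset Pd)
          rw [hz] at this
          simp only [Finset.card_empty, pow_zero] at this
          linarith
        rw [hz']
        simp only [Finset.empty_union, Finset.card_empty]
        ring
      rw [Finset.sum_congr rfl key]
      have := ih P' hP'ss (fun y => f y - f (y + 1))
      rw [this, hcard, fwdDiffIter_subshift]
      ring

variable {F : Type} [Field F] [Fintype F]

lemma monic_of_nf {B p : Polynomial F} (hp : p ∈ normalizedFactors B) : p.Monic := by
  have h1 : normalize p = p := normalize_normalized_factor p hp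
  have h2 : p ≠ 0 := (irreducible_of_normalized_factor p hp).ne_zero
  rw [← h1]
  exact monic_normalize h2

lemma mem_nf_iff {B p : Polynomial F} (hB : B.Monic) :
    p ∈ normalizedFactors B ↔ p.Monic ∧ Irreducible p ∧ p ∣ B := by
  constructor
  · intro hp
    exact ⟨monic_of_nf hp, irreducible_of_normalized_factor p hp,
      dvd_of_mem_normalizedFactors hp⟩
  · rintro ⟨hm, hi, hd⟩
    obtain ⟨q, hq, hassoc⟩ := exists_mem_normalizedFactors_of_dvd hB.ne_zero hi hd
    have hqm : q.Monic := monic_of_nf hq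
    rwa [eq_of_monic_of_associated hm hqm hassoc]

lemma NSet_eq {B : Polynomial F} (hB : B.Monic) :
    NSet B = (normalizedFactors B).toFinset.image Polynomial.natDegree := by
  ext e
  simp only [NSet, Finset.mem_filter, Finset.mem_range, Finset.mem_image,
    Multiset.mem_toFinset]
  constructor
  · rintro ⟨-, p, hm, hi, hd, rfl⟩
    exact ⟨p, (mem_nf_iff hB).2 ⟨hm, hi, hd⟩, rfl⟩
  · rintro ⟨p, hp, rfl⟩
    obtain ⟨hm, hi, hd⟩ := (mem_nf_iff hB).1 hp
    exact ⟨Nat.lt_succ_of_le (natDegree_le_of_dvd hd hB.ne_zero), p, hm, hi, hd, rfl⟩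

lemma prod_nf {B : Polynomial F} (hB : B.Monic) : (normalizedFactors B).prod = B := by
  refine eq_of_monic_of_associated ?_ hB (prod_normalizedFactors hB.ne_zero)
  have := monic_multiset_prod_of_monic (normalizedFactors B) id
    (fun p hp => monic_of_nf hp)
  rwa [Multiset.map_id] at this

/-- Lemma 4.3: `∑_{B ∣ A} μ(B) f(Ω(B)) = (-1)^{Ω(A)} D_{Ω(A)} f (0)`. -/
theorem stmt4 (A : Polynomial F) (hA : A.Monic) (f : ℝ → ℝ) :
    ∑ᶠ B ∈ {B : Polynomial F | B.Monic ∧ B ∣ A},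
        (muFF B : ℝ) * f (OmegaFF B : ℝ)
      = (-1) ^ OmegaFF A * fwdDiffIter (OmegaFF A) f 0 := by
  classical
  have hA0 : A ≠ 0 := hA.ne_zero
  set PA : Finset (Polynomial F) := (normalizedFactors A).toFinset with hPA
  -- finiteness of the set of monic divisors
  have hSfin : {B : Polynomial F | B.Monic ∧ B ∣ A}.Finite := by
    have hfin : {m : Multiset (Polynomial F) | m ≤ normalizedFactors A}.Finite := by
      refine Set.Finite.subset ((normalizedFactors A).powerset.toFinset.finite_toSet) ?_
      intro m hm
      simp only [Finset.coe_sort_coe, Finset.mem_coe, Multiset.mem_toFinset,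
        Multiset.mem_powerset]
      exact hm
    refine Set.Finite.subset (hfin.image Multiset.prod) ?_
    rintro B ⟨hBm, hBd⟩
    exact ⟨normalizedFactors B, (dvd_iff_normalizedFactors_le_normalizedFactors
      hBm.ne_zero hA0).1 hBd, prod_nf hBm⟩
  rw [finsum_mem_eq_finite_toFinset_sum _ hSfin]
  -- drop the non-squarefree divisors
  rw [← Finset.sum_filter_of_ne (p := fun B => Squarefree B)
    (fun B _ hB0 => by
      by_contra hsq
      apply hB0
      rw [muFF, if_neg hsq]
      simp)]
  -- properties of products of subsets of `PA`
  have hnf_prod : ∀ s : Finset (Polynomial F), s ⊆ PA →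
      normalizedFactors (∏ p ∈ s, p) = s.val := by
    intro s hs
    have hirr : ∀ p ∈ s.val, Irreducible p := by
      intro p hp
      exact irreducible_of_normalized_factor p (Multiset.mem_toFinset.1 (hs hp))
    rw [Finset.prod_eq_multiset_prod, Multiset.map_id']
    rw [normalizedFactors_prod_eq s.val hirr]
    refine Multiset.map_congr rfl ?_ |>.trans (Multiset.map_id _)
    intro p hp
    exact (monic_of_nf (Multiset.mem_toFinset.1 (hs hp))).normalize_eq_self
  have hmonic_prod : ∀ s : Finset (Polynomial F), s ⊆ PA → (∏ p ∈ s, p).Monic := by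
    intro s hs
    exact monic_prod_of_monic s id
      (fun p hp => monic_of_nf (Multiset.mem_toFinset.1 (hs hp)))
  have hdvd_prod : ∀ s : Finset (Polynomial F), s ⊆ PA → (∏ p ∈ s, p) ∣ A := by
    intro s hs
    have hle : s.val ≤ normalizedFactors A := by
      rw [Multiset.le_iff_count]
      intro p
      by_cases hps : p ∈ s
      · rw [Multiset.count_eq_one_of_mem s.nodup hps]
        exact Multiset.one_le_count_iff_mem.2 (Multiset.mem_toFinset.1 (hs hps))
      · rw [Multiset.count_eq_zero_of_notMem hps]
        exact Nat.zero_le _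
    calc (∏ p ∈ s, p) = s.val.prod := by
            rw [Finset.prod_eq_multiset_prod, Multiset.map_id']
      _ ∣ (normalizedFactors A).prod := Multiset.prod_dvd_prod_of_le hle
      _ = A := prod_nf hA
  have hsq_prod : ∀ s : Finset (Polynomial F), s ⊆ PA → Squarefree (∏ p ∈ s, p) := by
    intro s hs
    rw [squarefree_iff_nodup_normalizedFactors (hmonic_prod s hs).ne_zero, hnf_prod s hs]
    exact s.nodup
  -- reindex via the bijection with subsets of `PA`
  rw [Finset.sum_nbij'
    (i := fun B => (normalizedFactors B).toFinset)
    (j := fun s => ∏ p ∈ s, p)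
    (t := PA.powerset)
    (g := fun s => (-1 : ℝ) ^ s.card * f ((s.image Polynomial.natDegree).card))
    ?_ ?_ ?_ ?_ ?_]
  · have := comb Polynomial.natDegree PA f
    rw [this]
    have hOm : OmegaFF A = (PA.image Polynomial.natDegree).card := by
      rw [OmegaFF, NSet_eq hA]
    rw [hOm]
  · intro B hB
    simp only [Finset.mem_filter, Set.Finite.mem_toFinset, Set.mem_setOf_eq] at hB
    obtain ⟨⟨hBm, hBd⟩, _⟩ := hB
    rw [Finset.mem_powerset, hPA]
    exact Multiset.toFinset_subset.2 (Multiset.subset_of_le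
      ((dvd_iff_normalizedFactors_le_normalizedFactors hBm.ne_zero hA0).1 hBd))
  · intro s hs
    rw [Finset.mem_powerset] at hs
    simp only [Finset.mem_filter, Set.Finite.mem_toFinset, Set.mem_setOf_eq]
    exact ⟨⟨hmonic_prod s hs, hdvd_prod s hs⟩, hsq_prod s hs⟩
  · intro B hB
    simp only [Finset.mem_filter, Set.Finite.mem_toFinset, Set.mem_setOf_eq] at hB
    obtain ⟨⟨hBm, hBd⟩, hBsq⟩ := hB
    have hnodup : (normalizedFactors B).Nodup :=
      (squarefree_iff_nodup_normalizedFactors hBm.ne_zero).1 hBsq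
    show (∏ p ∈ (normalizedFactors B).toFinset, p) = B
    rw [Finset.prod_eq_multiset_prod, Multiset.map_id', Multiset.toFinset_val,
      Multiset.Nodup.dedup hnodup, prod_nf hBm]
  · intro s hs
    rw [Finset.mem_powerset] at hs
    show (normalizedFactors (∏ p ∈ s, p)).toFinset = s
    rw [hnf_prod s hs, Finset.val_toFinset]
  · intro B hB
    simp only [Finset.mem_filter, Set.Finite.mem_toFinset, Set.mem_setOf_eq] at hB
    obtain ⟨⟨hBm, hBd⟩, hBsq⟩ := hB
    have hmu : muFF B = (-1 : ℤ) ^ (normalizedFactors B).toFinset.card := by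
      rw [muFF, if_pos hBsq]
    have hOm : OmegaFF B = ((normalizedFactors B).toFinset.image
        Polynomial.natDegree).card := by
      rw [OmegaFF, NSet_eq hBm]
    rw [hmu, hOm]
    push_cast
    ring

end Aux
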